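/- arXiv:0704.1403 — 5 statements merged into one kernel-verified Lean document; each statement's English description precedes it below -/
import Mathlib

section
/- Let (𝔥,𝔞,Π_𝔞) be a V-algebra and E = Ê + [P,·] an adapted derivation of 𝔥 of degree k. Then for every n ≥ 2, every 1 ≤ i ≤ n−1 and all homogeneous x_1,…,x_n ∈ 𝔞, the higher derived brackets are graded symmetric: D_E^n(x_1⊗…⊗x_i⊗x_{i+1}⊗…⊗x_n) = (−1)^{|x_i||x_{i+1}|} D_E^n(x_1⊗…⊗x_{i+1}⊗x_i⊗…⊗x_n). -/
open scoped BigOperators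
open scoped Classical

/-- A ℤ-graded Lie algebra over ℝ: a graded vector space with a degree-0 bracket
satisfying graded skew-symmetry and the graded Jacobi identity. -/
structure GLA (H : Type) [AddCommGroup H] [Module ℝ H] where
  deg : ℤ → Submodule ℝ H
  isInternal : DirectSum.IsInternal deg
  brk : H →ₗ[ℝ] H →ₗ[ℝ] H
  brk_deg : ∀ (i j : ℤ), ∀ x ∈ deg i, ∀ y ∈ deg j, brk x y ∈ deg (i + j)
  skew : ∀ (i j : ℤ), ∀ x ∈ deg i, ∀ y ∈ deg j, brk x y = -(((-1 : ℝ) ^ (i * j)) • brk y x)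
  jacobi : ∀ (i j : ℤ), ∀ x ∈ deg i, ∀ y ∈ deg j, ∀ z : H,
    brk x (brk y z) = brk (brk x y) z + ((-1 : ℝ) ^ (i * j)) • brk y (brk x z)

/-- A V-algebra: a graded Lie algebra with an abelian graded subalgebra 𝔞 (the range of
the degree-0 projection `proj`) such that `proj` satisfies the derivation-like identity. -/
structure VAlg (H : Type) [AddCommGroup H] [Module ℝ H] extends GLA H where
  proj : H →ₗ[ℝ] H
  proj_idem : ∀ x : H, proj (proj x) = proj x
  proj_deg : ∀ (i : ℤ), ∀ x ∈ deg i, proj x ∈ deg i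
  abelian : ∀ x y : H, brk (proj x) (proj y) = 0
  proj_brk : ∀ x y : H, proj (brk x y) = proj (brk (proj x) y) + proj (brk x (proj y))

variable {H : Type} [AddCommGroup H] [Module ℝ H]

/-- A derivation of degree `k` of a graded Lie algebra. -/
def IsDer (G : GLA H) (k : ℤ) (E : H →ₗ[ℝ] H) : Prop :=
  (∀ (i : ℤ), ∀ x ∈ G.deg i, E x ∈ G.deg (i + k)) ∧
  (∀ (i : ℤ), ∀ x ∈ G.deg i, ∀ y : H,
    E (G.brk x y) = G.brk (E x) y + ((-1 : ℝ) ^ (k * i)) • G.brk x (E y))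

/-- Membership in the abelian subalgebra 𝔞 (the range of the projection). -/
def VAlg.inA (V : VAlg H) (x : H) : Prop := V.proj x = x

/-- Higher derived brackets of an adapted derivation with underlying map `E` and
inner-part element `P0`: `D⁰ = Π P0`, `Dⁿ(x₁,…,xₙ) = Π [[…[E x₁, x₂],…], xₙ]`. -/
noncomputable def VAlg.D (V : VAlg H) (E : H →ₗ[ℝ] H) (P0 : H) : (n : ℕ) → (Fin n → H) → H
  | 0, _ => V.proj P0
  | (n+1), x =>
      V.proj (List.foldl (fun z a => V.brk z a) (E (x 0)) (List.ofFn fun i : Fin n => x i.succ))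

/-- The Koszul sign of a permutation acting on homogeneous elements of degrees `d`. -/
noncomputable def koszul {n : ℕ} (σ : Equiv.Perm (Fin n)) (d : Fin n → ℤ) : ℝ :=
  ∏ p ∈ Finset.univ.filter (fun p : Fin n × Fin n => p.1 < p.2 ∧ σ p.2 < σ p.1),
    (-1 : ℝ) ^ (d (σ p.1) * d (σ p.2))

/-- The (r, n-r)-shuffles inside the symmetric group on `Fin n`. -/
noncomputable def shuffles (n r : ℕ) : Finset (Equiv.Perm (Fin n)) :=
  Finset.univ.filter fun σ => ∀ i j : Fin n, i < j → ((j : ℕ) < r ∨ r ≤ (i : ℕ)) → σ i < σ j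

/-- The Jacobiators of a family of maps `Dm : (n : ℕ) → (Fin n → H) → H`, evaluated at a
tuple `x` of homogeneous elements with degrees `d`. -/
noncomputable def Jac (Dm : (n : ℕ) → (Fin n → H) → H) (n : ℕ) (d : Fin n → ℤ)
    (x : Fin n → H) : H :=
  ∑ r : Fin (n + 1), ∑ σ ∈ shuffles n r.1,
    koszul σ d •
      Dm (n - r.1 + 1)
        (Fin.cons
          (Dm r.1 fun i => x (σ (Fin.castLE (Nat.lt_succ_iff.mp r.isLt) i)))
          (fun i : Fin (n - r.1) =>
            x (σ (Fin.cast (Nat.add_sub_cancel' (Nat.lt_succ_iff.mp r.isLt)) (Fin.natAdd r.1 i)))))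

/-- Higher derived brackets on lists (`n ≥ 1` arguments given as head and tail of a list). -/
noncomputable def VAlg.Dlist (V : VAlg H) (E : H →ₗ[ℝ] H) (P0 : H) : List H → H
  | [] => V.proj P0
  | z :: l => V.proj (List.foldl (fun w a => V.brk w a) (E z) l)


private lemma sign_helper (m n : ℤ) : (-1:ℝ) ^ (2 * m + n) = (-1:ℝ) ^ n := by
  rw [zpow_add₀ (by norm_num : (-1:ℝ) ≠ 0), zpow_mul]
  norm_num

private lemma foldl_smul (V : VAlg H) (c : ℝ) (l : List H) : ∀ w : H,
    List.foldl (fun z a => V.brk z a) (c • w) l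
      = c • List.foldl (fun z a => V.brk z a) w l := by
  induction l with
  | nil => intro w; rfl
  | cons h t ih =>
    intro w
    simp only [List.foldl_cons, map_smul, LinearMap.smul_apply, ih]

private lemma swap_tail (V : VAlg H) (a b : H) (p q : ℤ)
    (hadeg : a ∈ V.deg p) (hbdeg : b ∈ V.deg q) (hab : V.brk a b = 0) (w : H) :
    V.brk (V.brk w a) b = ((-1:ℝ) ^ (p * q)) • V.brk (V.brk w b) a := by
  have htop : w ∈ (⊤ : Submodule ℝ H) := Submodule.mem_top
  rw [← V.isInternal.submodule_iSup_eq_top] at htop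
  refine Submodule.iSup_induction (motive := fun w =>
      V.brk (V.brk w a) b = ((-1:ℝ) ^ (p * q)) • V.brk (V.brk w b) a) V.deg htop ?_ ?_ ?_
  · intro i x hx
    have hjac := V.jacobi i p x hx a hadeg b
    rw [hab, map_zero] at hjac
    have h1 : V.brk (V.brk x a) b = -(((-1:ℝ) ^ (i * p)) • V.brk a (V.brk x b)) :=
      eq_neg_of_add_eq_zero_left hjac.symm
    have hskew := V.skew p (i + q) a hadeg (V.brk x b) (V.brk_deg i q x hx b hbdeg)
    rw [h1, hskew, smul_neg, neg_neg, smul_smul, ← zpow_add₀ (by norm_num : (-1:ℝ) ≠ 0),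
      show i * p + p * (i + q) = 2 * (i * p) + p * q by ring, sign_helper]
  · simp
  · intro x y hx hy
    simp only [map_add, LinearMap.add_apply, hx, hy, smul_add]

private lemma swap_head (V : VAlg H) (k : ℤ) (E : H →ₗ[ℝ] H)
    (hE1 : ∀ (i : ℤ), ∀ x ∈ V.deg i, E x ∈ V.deg (i + k))
    (hE2 : ∀ (i : ℤ), ∀ x ∈ V.deg i, ∀ y : H,
      E (V.brk x y) = V.brk (E x) y + ((-1 : ℝ) ^ (k * i)) • V.brk x (E y))
    (a b : H) (p q : ℤ)
    (hadeg : a ∈ V.deg p) (hbdeg : b ∈ V.deg q) (hab : V.brk a b = 0) :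
    V.brk (E a) b = ((-1:ℝ) ^ (p * q)) • V.brk (E b) a := by
  have hder := hE2 p a hadeg b
  rw [hab, map_zero] at hder
  have h1 : V.brk (E a) b = -(((-1:ℝ) ^ (k * p)) • V.brk a (E b)) :=
    eq_neg_of_add_eq_zero_left hder.symm
  have hskew := V.skew p (q + k) a hadeg (E b) (hE1 q b hbdeg)
  rw [h1, hskew, smul_neg, neg_neg, smul_smul, ← zpow_add₀ (by norm_num : (-1:ℝ) ≠ 0),
    show k * p + p * (q + k) = 2 * (p * k) + p * q by ring, sign_helper]

/-- For a V-algebra `(𝔥,𝔞,Π)` and an adapted derivation `E = Ê + [P,·]` of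
degree `k`, the higher derived brackets are graded symmetric: interchanging two adjacent
homogeneous arguments `a, b ∈ 𝔞` of degrees `p, q` produces the sign `(-1)^(p*q)`.
(The list encoding `l₁ ++ a :: b :: l₂` realises an arbitrary `n ≥ 2` and `1 ≤ i ≤ n-1`.) -/
theorem higher_derived_brackets_graded_symmetric
    (H : Type) [AddCommGroup H] [Module ℝ H] (V : VAlg H)
    (k : ℤ) (Ehat : H →ₗ[ℝ] H) (P : H)
    (hE : IsDer V.toGLA k Ehat)
    (hAdapt : ∀ x : H, V.proj (Ehat (V.proj x)) = V.proj (Ehat x))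
    (hP : P ∈ V.deg k)
    (l₁ l₂ : List H) (a b : H) (p q : ℤ)
    (hl₁ : ∀ z ∈ l₁, V.inA z ∧ ∃ i, z ∈ V.deg i)
    (hl₂ : ∀ z ∈ l₂, V.inA z ∧ ∃ i, z ∈ V.deg i)
    (ha : V.inA a) (hadeg : a ∈ V.deg p)
    (hb : V.inA b) (hbdeg : b ∈ V.deg q) :
    V.Dlist (Ehat + V.brk P) P (l₁ ++ a :: b :: l₂)
      = ((-1 : ℝ) ^ (p * q)) • V.Dlist (Ehat + V.brk P) P (l₁ ++ b :: a :: l₂) := by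
  have hab : V.brk a b = 0 := by
    have h := V.abelian a b
    rwa [ha, hb] at h
  set E : H →ₗ[ℝ] H := Ehat + V.brk P with hEdef
  have hE1 : ∀ (i : ℤ), ∀ x ∈ V.deg i, E x ∈ V.deg (i + k) := by
    intro i x hx
    simp only [hEdef, LinearMap.add_apply]
    exact Submodule.add_mem _ (hE.1 i x hx)
      (by have := V.brk_deg k i P hP x hx; rwa [add_comm] at this)
  have hE2 : ∀ (i : ℤ), ∀ x ∈ V.deg i, ∀ y : H,
      E (V.brk x y) = V.brk (E x) y + ((-1 : ℝ) ^ (k * i)) • V.brk x (E y) := by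
    intro i x hx y
    have hjac := V.jacobi k i P hP x hx y
    have hder := hE.2 i x hx y
    simp only [hEdef, LinearMap.add_apply, map_add, smul_add]
    rw [hder, hjac]
    abel
  cases l₁ with
  | nil =>
    simp only [List.nil_append, VAlg.Dlist, List.foldl_cons]
    rw [swap_head V k E hE1 hE2 a b p q hadeg hbdeg hab, foldl_smul, map_smul]
  | cons z t =>
    simp only [List.cons_append, VAlg.Dlist, List.foldl_append, List.foldl_cons]
    rw [swap_tail V a b p q hadeg hbdeg hab, foldl_smul, map_smul]
end

section
/- Let (𝔥,𝔞,Π_𝔞) be a V-algebra and E = Ê + [P,·] an adapted derivation of odd degree with P ∈ 𝔞. Then for all n ≥ 0 the Jacobiators of the family of higher derived brackets of E decompose as J_E^n = J_Ê^n + D^n_{[Ê(P),·]}, where D^n_{[Ê(P),·]} denotes the higher derived brackets of the inner derivation [Ê(P),·] (an adapted derivation with Ê-part 0 and element Ê(P)). -/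
open scoped BigOperators
open scoped Classical

variable {H : Type} [AddCommGroup H] [Module ℝ H]

lemma foldl_brk_zero (V : VAlg H) :
    ∀ l : List H, List.foldl (fun z a => V.brk z a) 0 l = 0
  | [] => rfl
  | a :: l => by
      have h : V.brk (0:H) a = 0 := by simp
      simp only [List.foldl_cons, h]
      exact foldl_brk_zero V l

lemma D_congr_head (V : VAlg H) (E E' : H →ₗ[ℝ] H) (P0 P0' : H) (m : ℕ)
    (y : Fin (m+1) → H) (h : E (y 0) = E' (y 0)) :
    V.D E P0 (m+1) y = V.D E' P0' (m+1) y := by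
  simp only [VAlg.D, h]

lemma shuffles_zero (n : ℕ) : shuffles n 0 = {1} := by
  ext σ
  simp only [shuffles, Finset.mem_filter, Finset.mem_univ, true_and, Finset.mem_singleton]
  constructor
  · intro hσ
    have hm : StrictMono σ := fun i j hij => hσ i j hij (Or.inr (Nat.zero_le _))
    have key : StrictMono.orderIsoOfSurjective (σ : Fin n → Fin n) hm σ.surjective
        = OrderIso.refl (Fin n) := Subsingleton.elim _ _
    apply Equiv.ext; intro i
    have h2 := congrArg (fun f : Fin n ≃o Fin n => f i) key
    simpa [StrictMono.coe_orderIsoOfSurjective] using h2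
  · rintro rfl
    intro i j hij _
    simpa using hij

lemma koszul_one {n : ℕ} (d : Fin n → ℤ) : koszul (1 : Equiv.Perm (Fin n)) d = 1 := by
  unfold koszul
  rw [Finset.filter_false_of_mem, Finset.prod_empty]
  intro p _
  simp only [Equiv.Perm.coe_one, id_eq, not_and, not_lt]
  exact fun h1 => h1.le

lemma D_cons_P (V : VAlg H) (Ehat : H →ₗ[ℝ] H) (P : H) (hPa : V.proj P = P) :
    ∀ (m : ℕ) (y : Fin m → H),
      V.D (Ehat + V.brk P) P (m+1) (Fin.cons P y) = V.D (V.brk (Ehat P)) (Ehat P) m y := by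
  have hPP : V.brk P P = 0 := by
    have := V.abelian P P; rwa [hPa] at this
  have hEP : (Ehat + V.brk P) P = Ehat P := by
    simp [LinearMap.add_apply, hPP]
  intro m y
  cases m with
  | zero =>
      simp [VAlg.D, Fin.cons_zero, hEP, List.ofFn_zero]
  | succ m' =>
      simp only [VAlg.D, Fin.cons_zero, Fin.cons_succ, hEP]
      congr 1
      rw [List.ofFn_succ, List.foldl_cons]

/-- Let `(𝔥,𝔞,Π)` be a V-algebra and `E = Ê + [P,·]` an adapted derivation
of odd degree `k` with `P ∈ 𝔞` (and `P` homogeneous of degree `k`).  Then for all `n ≥ 0`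
and all tuples of homogeneous elements of `𝔞`, the Jacobiators of the higher derived
brackets of `E` decompose as `J_E^n = J_Ê^n + D^n_{[Ê(P),·]}`, where `[Ê(P),·]` is the inner
derivation with `Ê`-part `0` and element `Ê(P)`, and `Ê` has element `0`. -/
theorem jacobiator_decomposition
    (H : Type) [AddCommGroup H] [Module ℝ H] (V : VAlg H)
    (k : ℤ) (hk : Odd k) (Ehat : H →ₗ[ℝ] H) (P : H)
    (hE : IsDer V.toGLA k Ehat)
    (hAdapt : ∀ x : H, V.proj (Ehat (V.proj x)) = V.proj (Ehat x))
    (hPdeg : P ∈ V.deg k) (hPa : V.inA P)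
    (n : ℕ) (d : Fin n → ℤ) (x : Fin n → H)
    (hxdeg : ∀ i, x i ∈ V.deg (d i)) (hxa : ∀ i, V.inA (x i)) :
    Jac (V.D (Ehat + V.brk P) P) n d x
      = Jac (V.D Ehat 0) n d x + V.D (V.brk (Ehat P)) (Ehat P) n x := by
  classical
  have hPa' : V.proj P = P := hPa
  have hbrkPa : ∀ w : H, V.proj w = w → V.brk P w = 0 := by
    intro w hw
    have := V.abelian P w
    rwa [hPa', hw] at this
  have hE0 : ∀ w : H, V.proj w = w → (Ehat + V.brk P) w = Ehat w := by
    intro w hw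
    simp [LinearMap.add_apply, hbrkPa w hw]
  unfold Jac
  rw [Fin.sum_univ_succ, Fin.sum_univ_succ]
  -- the r = 0 term for Ehat vanishes
  have hhatzero :
      (∑ σ ∈ shuffles n ((0 : Fin (n+1)) : ℕ),
        koszul σ d •
          V.D Ehat 0 (n - ((0 : Fin (n+1)) : ℕ) + 1)
            (Fin.cons
              (V.D Ehat 0 ((0 : Fin (n+1)) : ℕ)
                fun i => x (σ (Fin.castLE (Nat.lt_succ_iff.mp (0 : Fin (n+1)).isLt) i)))
              (fun i : Fin (n - ((0 : Fin (n+1)) : ℕ)) =>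
                x (σ (Fin.cast (Nat.add_sub_cancel' (Nat.lt_succ_iff.mp (0 : Fin (n+1)).isLt))
                  (Fin.natAdd ((0 : Fin (n+1)) : ℕ) i)))))) = 0 := by
    have h0 : ((0 : Fin (n+1)) : ℕ) = 0 := rfl
    rw [show shuffles n ((0 : Fin (n+1)) : ℕ) = {1} from shuffles_zero n,
      Finset.sum_singleton]
    have hhead : V.D Ehat 0 ((0 : Fin (n+1)) : ℕ)
        (fun i => x ((1 : Equiv.Perm (Fin n))
          (Fin.castLE (Nat.lt_succ_iff.mp (0 : Fin (n+1)).isLt) i))) = 0 := by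
      show V.proj 0 = 0
      simp
    rw [hhead]
    show koszul 1 d • V.D Ehat 0 ((n - 0) + 1) _ = 0
    simp only [VAlg.D, Fin.cons_zero, map_zero, foldl_brk_zero, smul_zero]
    show koszul 1 d • V.proj (List.foldl _ (Ehat 0) _) = 0
    simp only [map_zero, foldl_brk_zero, smul_zero]
  -- the r = 0 term for E equals the derived bracket of [Ê(P),·]
  have hEzero :
      (∑ σ ∈ shuffles n ((0 : Fin (n+1)) : ℕ),
        koszul σ d •
          V.D (Ehat + V.brk P) P (n - ((0 : Fin (n+1)) : ℕ) + 1)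
            (Fin.cons
              (V.D (Ehat + V.brk P) P ((0 : Fin (n+1)) : ℕ)
                fun i => x (σ (Fin.castLE (Nat.lt_succ_iff.mp (0 : Fin (n+1)).isLt) i)))
              (fun i : Fin (n - ((0 : Fin (n+1)) : ℕ)) =>
                x (σ (Fin.cast (Nat.add_sub_cancel' (Nat.lt_succ_iff.mp (0 : Fin (n+1)).isLt))
                  (Fin.natAdd ((0 : Fin (n+1)) : ℕ) i))))))
        = V.D (V.brk (Ehat P)) (Ehat P) n x := by
    rw [show shuffles n ((0 : Fin (n+1)) : ℕ) = {1} from shuffles_zero n,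
      Finset.sum_singleton, koszul_one, one_smul]
    have hhead : V.D (Ehat + V.brk P) P ((0 : Fin (n+1)) : ℕ)
        (fun i => x ((1 : Equiv.Perm (Fin n))
          (Fin.castLE (Nat.lt_succ_iff.mp (0 : Fin (n+1)).isLt) i))) = P := by
      show V.proj P = P
      exact hPa'
    rw [hhead]
    have htail : (fun i : Fin (n - ((0 : Fin (n+1)) : ℕ)) =>
        x ((1 : Equiv.Perm (Fin n))
          (Fin.cast (Nat.add_sub_cancel' (Nat.lt_succ_iff.mp (0 : Fin (n+1)).isLt))
            (Fin.natAdd ((0 : Fin (n+1)) : ℕ) i)))) = x := by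
      funext i
      congr 1
      ext
      simp
      rfl
    rw [htail]
    exact D_cons_P V Ehat P hPa' n x
  rw [hhatzero, hEzero, zero_add]
  rw [add_comm (∑ i : Fin n, _)]
  congr 1
  apply Finset.sum_congr rfl
  intro r _
  apply Finset.sum_congr rfl
  intro σ _
  congr 1
  simp only [Fin.val_succ]
  have hg : V.D (Ehat + V.brk P) P ((r : ℕ) + 1)
        (fun i => x (σ (Fin.castLE (Nat.lt_succ_iff.mp r.succ.isLt) i)))
      = V.D Ehat 0 ((r : ℕ) + 1)
        (fun i => x (σ (Fin.castLE (Nat.lt_succ_iff.mp r.succ.isLt) i))) := by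
    apply D_congr_head
    exact hE0 _ (hxa _)
  rw [hg]
  apply D_congr_head
  rw [Fin.cons_zero]
  apply hE0
  show V.proj (V.D Ehat 0 ((r : ℕ) + 1) _) = _
  simp only [VAlg.D]
  exact V.proj_idem _
end

section
/- Let Φ: (𝔥₁,𝔞₁,Π_{𝔞₁}) → (𝔥₂,𝔞₂,Π_{𝔞₂}) be a morphism of V-algebras, i.e. a morphism of graded Lie algebras with Π_{𝔞₂}∘Φ = Φ∘Π_{𝔞₁}. Let E_i = Ê_i + [P_i,·] be adapted derivations of 𝔥_i (i = 1,2) which are Φ-related, i.e. E₂∘Φ = Φ∘E₁ and P₂ − Φ(P₁) ∈ Ker Π_{𝔞₂}. Then for all n ≥ 1 and all x_1,…,x_n ∈ 𝔞₁ one has D^n_{E₂}(Φ(x_1)⊗…⊗Φ(x_n)) = Φ(D^n_{E₁}(x_1⊗…⊗x_n)), and moreover D^0_{E₂} = Φ(D^0_{E₁}). In particular, if E₁ and E₂ are Maurer–Cartan elements (degree 1, E_i∘E_i = 0), then Φ restricts to a linear morphism of the induced L∞-algebras 𝔞₁ → 𝔞₂. -/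
open scoped BigOperators
open scoped Classical

variable {H : Type} [AddCommGroup H] [Module ℝ H]

/-- Let `Φ : (𝔥₁,𝔞₁,Π₁) → (𝔥₂,𝔞₂,Π₂)` be a morphism of V-algebras and let
`E_i = Ê_i + [P_i,·]` be adapted derivations (of a common degree `k`) which are Φ-related,
i.e. `E₂∘Φ = Φ∘E₁` and `P₂ − Φ(P₁) ∈ Ker Π₂`.  Then for all `n ≥ 1` and all
`x₁,…,xₙ ∈ 𝔞₁` one has `D^n_{E₂}(Φ x₁,…,Φ xₙ) = Φ (D^n_{E₁}(x₁,…,xₙ))`, and moreover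
`D^0_{E₂} = Φ (D^0_{E₁})`; in particular (for Maurer–Cartan `E₁, E₂`) `Φ` restricts to a
linear morphism of the induced L∞-algebras `𝔞₁ → 𝔞₂`. -/
theorem v_morphism_intertwines_derived_brackets
    (H₁ H₂ : Type) [AddCommGroup H₁] [Module ℝ H₁] [AddCommGroup H₂] [Module ℝ H₂]
    (V₁ : VAlg H₁) (V₂ : VAlg H₂)
    (Φ : H₁ →ₗ[ℝ] H₂)
    (hΦdeg : ∀ (i : ℤ), ∀ x ∈ V₁.deg i, Φ x ∈ V₂.deg i)
    (hΦbrk : ∀ x y : H₁, Φ (V₁.brk x y) = V₂.brk (Φ x) (Φ y))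
    (hΦproj : ∀ x : H₁, V₂.proj (Φ x) = Φ (V₁.proj x))
    (k : ℤ) (Ehat₁ : H₁ →ₗ[ℝ] H₁) (P₁ : H₁) (Ehat₂ : H₂ →ₗ[ℝ] H₂) (P₂ : H₂)
    (hE₁ : IsDer V₁.toGLA k Ehat₁)
    (hAdapt₁ : ∀ x : H₁, V₁.proj (Ehat₁ (V₁.proj x)) = V₁.proj (Ehat₁ x))
    (hP₁deg : P₁ ∈ V₁.deg k)
    (hE₂ : IsDer V₂.toGLA k Ehat₂)
    (hAdapt₂ : ∀ x : H₂, V₂.proj (Ehat₂ (V₂.proj x)) = V₂.proj (Ehat₂ x))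
    (hP₂deg : P₂ ∈ V₂.deg k)
    (hRelMap : (Ehat₂ + V₂.brk P₂) ∘ₗ Φ = Φ ∘ₗ (Ehat₁ + V₁.brk P₁))
    (hRelP : V₂.proj (P₂ - Φ P₁) = 0) :
    (∀ (n : ℕ), 1 ≤ n → ∀ x : Fin n → H₁, (∀ i, V₁.inA (x i)) →
        V₂.D (Ehat₂ + V₂.brk P₂) P₂ n (fun i => Φ (x i))
          = Φ (V₁.D (Ehat₁ + V₁.brk P₁) P₁ n x)) ∧
      V₂.proj P₂ = Φ (V₁.proj P₁) := by

  constructor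
  · intro n hn x hx
    obtain ⟨m, rfl⟩ : ∃ m, n = m + 1 := ⟨n - 1, by omega⟩
    show V₂.proj _ = Φ (V₁.proj _)
    rw [← hΦproj]
    congr 1
    have hE : ∀ z : H₁, (Ehat₂ + V₂.brk P₂) (Φ z) = Φ ((Ehat₁ + V₁.brk P₁) z) := by
      intro z
      exact congrFun (congrArg (fun f => f.toFun) hRelMap) z
    have hfold : ∀ (l : List H₁) (z : H₁),
        List.foldl (fun z a => V₂.brk z a) (Φ z) (l.map Φ)
          = Φ (List.foldl (fun z a => V₁.brk z a) z l) := by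
      intro l
      induction l with
      | nil => intro z; rfl
      | cons a t ih =>
          intro z
          simp only [List.map_cons, List.foldl_cons]
          rw [← hΦbrk, ih]
    have hlist : (List.ofFn fun i : Fin m => Φ (x i.succ))
        = (List.ofFn fun i : Fin m => x i.succ).map Φ := by
      simp only [List.map_ofFn]; rfl
    rw [hlist, hE, hfold]
  · have h : V₂.proj P₂ = V₂.proj (Φ P₁) := by
      have := hRelP
      rw [map_sub, sub_eq_zero] at this
      exact this
    rw [h, hΦproj]
end

section
/- Let (𝔥,𝔞,Π_𝔞) be a V-algebra and m_t a degree-0 derivation of 𝔥[[t]] with Π_{𝔞[[t]]}∘m_t∘Π_{𝔞[[t]]} = Π_{𝔞[[t]]}∘m_t. Then the system of equations d/dt U^n(t)(x_1⊗…⊗x_n) = Σ_{σ∈Σ_n} sign(σ) Σ_{k≥1} Σ_{l_1+⋯+l_k=n} (1/(k!·l_1!⋯l_k!)) D^k_{m_t}( U^{l_1}(t)(x_{σ(1)}⊗…⊗x_{σ(l_1)}) ⊗ … ⊗ U^{l_k}(t)(x_{σ(l_1+⋯+l_{k-1}+1)}⊗…⊗x_{σ(n)}) ), for all n ≥ 1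 and x_i ∈ 𝔞[[t]], with initial conditions U^1(0) = id and U^n(0) = 0 for n ≠ 1, has a unique solution by formal power series in t among families {U^n(t): S^n(𝔞[[t]]) → 𝔞[[t]]}_{n≥0}; moreover this solution has U^0(t) = 0. -/
open scoped BigOperators
open scoped Classical

variable {H : Type} [AddCommGroup H] [Module ℝ H]

/-- A tuple of homogeneous elements of the abelian subalgebra `𝔞`, of degrees `d`. -/
def HomA (V : VAlg H) {n : ℕ} (d : Fin n → ℤ) (x : Fin n → H) : Prop :=
  (∀ i, x i ∈ V.deg (d i)) ∧ (∀ i, V.inA (x i))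

/-- The `t^r`-coefficient of the right-hand side of the flow equation
`d/dt Uⁿ = Σ_σ Σ_{k,l₁+⋯+l_k=n} (sign(σ)/(k!·l₁!⋯l_k!)) D^k_{m_t}(U^{l₁}(…)⊗…⊗U^{l_k}(…))`
in the formal setting, where `m` and `U` are given by their `t`-coefficients. -/
noncomputable def formalEqnRHS (V : VAlg H) (m : ℕ → H →ₗ[ℝ] H)
    (U : ℕ → (n : ℕ) → (Fin n → ℤ) → (Fin n → H) → H)
    (r n : ℕ) (d : Fin n → ℤ) (x : Fin n → H) : H :=
  ∑ σ : Equiv.Perm (Fin n), ∑ c : Composition n,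
    ∑ p ∈ Finset.Nat.antidiagonalTuple (c.length + 1) r,
      (koszul σ d /
          ((Nat.factorial c.length : ℝ) *
            ∏ j : Fin c.length, (Nat.factorial (c.blocksFun j) : ℝ))) •
        V.D (m (p 0)) 0 c.length
          (fun j => U (p j.succ) (c.blocksFun j)
            (fun i => d (σ (c.embedding j i))) (fun i => x (σ (c.embedding j i))))

/-- A formal solution of the flow equation for the coalgebra morphism `U(t)`:
`U⁰ = 0`, values in `𝔞`, the coefficientwise flow equation for all `n ≥ 1`, and the
initial conditions `U¹(0) = id`, `Uⁿ(0) = 0` for `n ≠ 1`. -/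
def IsFormalSol (V : VAlg H) (m : ℕ → H →ₗ[ℝ] H)
    (U : ℕ → (n : ℕ) → (Fin n → ℤ) → (Fin n → H) → H) : Prop :=
  (∀ (r : ℕ) (d : Fin 0 → ℤ) (x : Fin 0 → H), U r 0 d x = 0) ∧
  (∀ (r n : ℕ) (d : Fin n → ℤ) (x : Fin n → H), HomA V d x → V.inA (U r n d x)) ∧
  (∀ (n : ℕ), 1 ≤ n → ∀ (r : ℕ) (d : Fin n → ℤ) (x : Fin n → H), HomA V d x →
    ((r : ℝ) + 1) • U (r + 1) n d x = formalEqnRHS V m U r n d x) ∧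
  (∀ (d : Fin 1 → ℤ) (x : Fin 1 → H), HomA V d x → U 0 1 d x = x 0) ∧
  (∀ (n : ℕ), n ≠ 1 → ∀ (d : Fin n → ℤ) (x : Fin n → H), HomA V d x → U 0 n d x = 0)

section Aux

variable (V : VAlg H) (m : ℕ → H →ₗ[ℝ] H)

lemma inA_zero : V.inA (0 : H) := map_zero _

lemma inA_smul (a : ℝ) {x : H} (h : V.inA x) : V.inA (a • x) := by
  unfold VAlg.inA at *; rw [map_smul, h]

lemma inA_sum {ι : Type*} (s : Finset ι) (f : ι → H) (h : ∀ i ∈ s, V.inA (f i)) :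
    V.inA (∑ i ∈ s, f i) := by
  unfold VAlg.inA at *
  rw [map_sum]
  exact Finset.sum_congr rfl h

lemma inA_D (E : H →ₗ[ℝ] H) (P0 : H) (n : ℕ) (x : Fin n → H) : V.inA (V.D E P0 n x) := by
  cases n with
  | zero => exact V.proj_idem _
  | succ k => exact V.proj_idem _

lemma D_len_zero (E : H →ₗ[ℝ] H) (P0 : H) {k : ℕ} (hk : k = 0) (x : Fin k → H) :
    V.D E P0 k x = V.proj P0 := by subst hk; rfl

lemma formalEqnRHS_nil (U : ℕ → (n : ℕ) → (Fin n → ℤ) → (Fin n → H) → H)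
    (r : ℕ) (d : Fin 0 → ℤ) (x : Fin 0 → H) :
    formalEqnRHS V m U r 0 d x = 0 := by
  unfold formalEqnRHS
  refine Finset.sum_eq_zero fun σ _ => Finset.sum_eq_zero fun c _ =>
    Finset.sum_eq_zero fun p _ => ?_
  have hc : c.length = 0 := Nat.le_zero.mp c.length_le
  rw [D_len_zero V _ _ hc, map_zero, smul_zero]

lemma inA_formalEqnRHS (U : ℕ → (n : ℕ) → (Fin n → ℤ) → (Fin n → H) → H)
    (r n : ℕ) (d : Fin n → ℤ) (x : Fin n → H) :
    V.inA (formalEqnRHS V m U r n d x) := by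
  unfold formalEqnRHS
  refine inA_sum V _ _ fun σ _ => inA_sum V _ _ fun c _ => inA_sum V _ _ fun p _ => ?_
  exact inA_smul V _ (inA_D V _ _ _ _)

lemma formalEqnRHS_congr (U U' : ℕ → (n : ℕ) → (Fin n → ℤ) → (Fin n → H) → H)
    (r n : ℕ) (d : Fin n → ℤ) (x : Fin n → H)
    (hU : ∀ p, p ≤ r → ∀ (n' : ℕ) (d' : Fin n' → ℤ) (x' : Fin n' → H),
      HomA V d' x' → U p n' d' x' = U' p n' d' x')
    (hx : HomA V d x) :
    formalEqnRHS V m U r n d x = formalEqnRHS V m U' r n d x := by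
  unfold formalEqnRHS
  refine Finset.sum_congr rfl fun σ _ => Finset.sum_congr rfl fun c _ =>
    Finset.sum_congr rfl fun p hp => ?_
  have hsum : ∑ i, p i = r := Finset.Nat.mem_antidiagonalTuple.mp hp
  congr 1
  congr 1
  funext j
  refine hU (p j.succ) ?_ _ _ _ ⟨fun i => hx.1 _, fun i => hx.2 _⟩
  calc p j.succ ≤ ∑ i, p i :=
        Finset.single_le_sum (fun _ _ => Nat.zero_le _) (Finset.mem_univ _)
    _ = r := hsum

/-- The initial-time value: `U⁰(0) = 0`, `U¹(0) = id`, `Uⁿ(0) = 0` for `n ≥ 2`. -/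
def U0 : (n : ℕ) → (Fin n → ℤ) → (Fin n → H) → H
  | 1, _, x => x 0
  | _, _, _ => 0

/-- The history of coefficients of the solution: `hist V m r p` is the `p`-th coefficient
as known after `r` recursion steps (only meaningful for `p ≤ r`). -/
noncomputable def hist (V : VAlg H) (m : ℕ → H →ₗ[ℝ] H) :
    ℕ → ℕ → (n : ℕ) → (Fin n → ℤ) → (Fin n → H) → H
  | 0, _ => U0
  | (r+1), p =>
      if p = r + 1 then fun n d x => ((r : ℝ) + 1)⁻¹ • formalEqnRHS V m (hist V m r) r n d x
      else hist V m r p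

/-- The solution. -/
noncomputable def sol (V : VAlg H) (m : ℕ → H →ₗ[ℝ] H) (r : ℕ) :
    (n : ℕ) → (Fin n → ℤ) → (Fin n → H) → H := hist V m r r

lemma sol_succ (r n : ℕ) (d : Fin n → ℤ) (x : Fin n → H) :
    sol V m (r + 1) n d x = ((r : ℝ) + 1)⁻¹ • formalEqnRHS V m (hist V m r) r n d x := by
  show hist V m (r + 1) (r + 1) n d x = _
  rw [hist, if_pos rfl]

lemma hist_le (r p : ℕ) (hp : p ≤ r) : hist V m r p = sol V m p := by
  induction r with
  | zero =>
    have : p = 0 := Nat.le_zero.mp hp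
    subst this; rfl
  | succ r ih =>
    by_cases hpe : p = r + 1
    · subst hpe; rfl
    · have hp' : p ≤ r := by omega
      rw [hist, if_neg hpe]
      exact ih hp'

end Aux

/-- Let `(𝔥,𝔞,Π)` be a V-algebra and `m_t` a degree-0 derivation of
`𝔥[[t]]` (coefficients `m_r`) with `Π∘m_t∘Π = Π∘m_t`.  Then the flow system for the
families `Uⁿ(t) : Sⁿ(𝔞[[t]]) → 𝔞[[t]]` with initial conditions `U¹(0) = id`, `Uⁿ(0) = 0`
(`n ≠ 1`) has a unique solution by formal power series in `t`, and that solution has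
`U⁰(t) = 0`. -/
theorem formal_flow_system_unique_solution
    (H : Type) [AddCommGroup H] [Module ℝ H] (V : VAlg H)
    (m : ℕ → H →ₗ[ℝ] H)
    (hder : ∀ r : ℕ, IsDer V.toGLA 0 (m r))
    (hproj : ∀ (r : ℕ) (x : H), V.proj (m r (V.proj x)) = V.proj (m r x)) :
    (∃ U, IsFormalSol V m U) ∧
    (∀ U U', IsFormalSol V m U → IsFormalSol V m U' →
      ∀ (r n : ℕ) (d : Fin n → ℤ) (x : Fin n → H), HomA V d x →
        U r n d x = U' r n d x) := by
  constructor
  · refine ⟨sol V m, ?_, ?_, ?_, ?_, ?_⟩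
    · intro r d x
      cases r with
      | zero => rfl
      | succ r => rw [sol_succ, formalEqnRHS_nil, smul_zero]
    · intro r n d x hx
      cases r with
      | zero =>
        match n, d, x with
        | 0, d, x => exact inA_zero V
        | 1, d, x => exact hx.2 0
        | (k+2), d, x => exact inA_zero V
      | succ r =>
        rw [sol_succ]
        exact inA_smul V _ (inA_formalEqnRHS V m _ r n d x)
    · intro n hn r d x hx
      rw [sol_succ]
      have hne : ((r : ℝ) + 1) ≠ 0 := by positivity
      rw [smul_smul, mul_inv_cancel₀ hne, one_smul]
      exact formalEqnRHS_congr V m _ _ r n d x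
        (fun p hp n' d' x' _ => by rw [hist_le V m r p hp]) hx
    · intro d x hx; rfl
    · intro n hn d x hx
      match n, hn, d, x with
      | 0, hn, d, x => rfl
      | (k+2), hn, d, x => rfl
  · intro U U' hU hU' r
    induction r using Nat.strong_induction_on with
    | _ r ih =>
      intro n d x hx
      cases r with
      | zero =>
        by_cases h1 : n = 1
        · subst h1
          rw [hU.2.2.2.1 d x hx, hU'.2.2.2.1 d x hx]
        · rw [hU.2.2.2.2 n h1 d x hx, hU'.2.2.2.2 n h1 d x hx]
      | succ r =>
        cases n with
        | zero => rw [hU.1, hU'.1]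
        | succ n =>
          have hne : ((r : ℝ) + 1) ≠ 0 := by positivity
          refine smul_right_injective H hne ?_
          show ((r : ℝ) + 1) • U (r + 1) (n + 1) d x = ((r : ℝ) + 1) • U' (r + 1) (n + 1) d x
          rw [hU.2.2.1 (n+1) (Nat.succ_le_succ (Nat.zero_le n)) r d x hx,
            hU'.2.2.1 (n+1) (Nat.succ_le_succ (Nat.zero_le n)) r d x hx]
          exact formalEqnRHS_congr V m U U' r (n+1) d x
            (fun p hp => ih p (Nat.lt_succ_of_le hp)) hx
end

section
/- Let (𝔥,𝔞,Π_𝔞) be a V-algebra and m_t, t ∈ [0,1], a family of degree-0 derivations of 𝔥 with Π_𝔞∘m_t∘Π_𝔞 = Π_𝔞∘m_t for all t. Assume the only solution of the Cauchy problem d/dt λ_t = Π_𝔞∘m_t∘λ_t, λ_0 = 0 is λ_t ≡ 0. Then any two families {U^n(t)}_{n≥1} and {Ũ^n(t)}_{n≥1} of maps S^n(𝔞) → 𝔞, both with U^0 = Ũ^0 = 0, both satisfying the system d/dt U^n(t)(x_1⊗…⊗x_n) = Σ_{σ∈Σ_n} sign(σ) Σ_{k≥1} Σ_{l_1+⋯+l_k=n}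 (1/(k!·l_1!⋯l_k!)) D^k_{m_t}( U^{l_1}(t)(x_{σ(1)}⊗…⊗x_{σ(l_1)}) ⊗ … ⊗ U^{l_k}(t)(x_{σ(l_1+⋯+l_{k-1}+1)}⊗…⊗x_{σ(n)}) ) for all t ∈ [0,1], and with the same initial values at t = 0, coincide: U^n(t) = Ũ^n(t) for all n and all t ∈ [0,1]. -/
open scoped BigOperators
open scoped Classical

variable {H : Type} [AddCommGroup H] [Module ℝ H]

/-- The right-hand side `Σ_σ Σ_{k,l₁+⋯+l_k=n} (sign(σ)/(k!·l₁!⋯l_k!))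
D^k_{m_t}(U^{l₁}(…)⊗…⊗U^{l_k}(…))` of the flow equation for the family `U`. -/
noncomputable def eqnRHS (V : VAlg H) (mt : H →ₗ[ℝ] H)
    (U : (n : ℕ) → (Fin n → ℤ) → (Fin n → H) → H)
    (n : ℕ) (d : Fin n → ℤ) (x : Fin n → H) : H :=
  ∑ σ : Equiv.Perm (Fin n), ∑ c : Composition n,
    (koszul σ d /
        ((Nat.factorial c.length : ℝ) *
          ∏ j : Fin c.length, (Nat.factorial (c.blocksFun j) : ℝ))) •
      V.D mt 0 c.length
        (fun j => U (c.blocksFun j)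
          (fun i => d (σ (c.embedding j i))) (fun i => x (σ (c.embedding j i))))

/-- An (analytic) solution on `[0,1]` of the flow system for the family
`Uⁿ(t) : Sⁿ(𝔞) → 𝔞`, with `U⁰ = 0` and values in `𝔞`. -/
def IsAnalyticSol {H : Type} [NormedAddCommGroup H] [NormedSpace ℝ H] (V : VAlg H)
    (m : ℝ → H →ₗ[ℝ] H)
    (U : ℝ → (n : ℕ) → (Fin n → ℤ) → (Fin n → H) → H) : Prop :=
  (∀ (t : ℝ) (d : Fin 0 → ℤ) (x : Fin 0 → H), U t 0 d x = 0) ∧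
  (∀ (t : ℝ) (n : ℕ) (d : Fin n → ℤ) (x : Fin n → H), HomA V d x → V.inA (U t n d x)) ∧
  (∀ (n : ℕ), 1 ≤ n → ∀ (d : Fin n → ℤ) (x : Fin n → H), HomA V d x →
    ∀ t ∈ Set.Icc (0 : ℝ) 1,
      HasDerivWithinAt (fun s => U s n d x) (eqnRHS V (m t) (U t) n d x)
        (Set.Icc (0 : ℝ) 1) t)

lemma neg_one_zpow_mul_self (m : ℤ) : ((-1:ℝ)^m) * ((-1:ℝ)^m) = 1 := by
  rcases Int.even_or_odd m with h | h
  · rw [h.neg_one_zpow]; norm_num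
  · rw [h.neg_one_zpow]; norm_num

lemma koszul_eq_prod {n : ℕ} (σ : Equiv.Perm (Fin n)) (d : Fin n → ℤ) :
    koszul σ d = ∏ p ∈ Finset.univ.filter (fun p : Fin n × Fin n => p.1 < p.2),
      (if σ p.2 < σ p.1 then (-1:ℝ) ^ (d (σ p.1) * d (σ p.2)) else 1) := by
  rw [koszul, Finset.prod_filter, Finset.prod_filter]
  apply Finset.prod_congr rfl
  intro p _
  by_cases h1 : p.1 < p.2 <;> by_cases h2 : σ p.2 < σ p.1 <;> simp [h1, h2]

lemma koszul_mul {n : ℕ} (σ τ : Equiv.Perm (Fin n)) (d : Fin n → ℤ) :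
    koszul (σ * τ) d = koszul σ d * koszul τ (fun i => d (σ i)) := by
  classical
  have hsq : ∀ a b : Fin n, ((-1:ℝ) ^ (d a * d b)) * ((-1:ℝ) ^ (d b * d a)) = 1 := by
    intro a b
    rw [mul_comm (d b) (d a)]
    exact neg_one_zpow_mul_self _
  set S : Finset (Fin n × Fin n) := Finset.univ.filter (fun p => p.1 < p.2) with hS
  set e : Fin n × Fin n → Fin n × Fin n :=
    fun p => if τ p.1 < τ p.2 then (τ p.1, τ p.2) else (τ p.2, τ p.1) with he
  set e' : Fin n × Fin n → Fin n × Fin n :=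
    fun p => if τ⁻¹ p.1 < τ⁻¹ p.2 then (τ⁻¹ p.1, τ⁻¹ p.2) else (τ⁻¹ p.2, τ⁻¹ p.1) with he'
  have hmemS : ∀ p : Fin n × Fin n, p ∈ S ↔ p.1 < p.2 := by
    intro p; simp [hS]
  have key : ∀ p ∈ S,
      (if (σ * τ) p.2 < (σ * τ) p.1 then (-1:ℝ) ^ (d ((σ*τ) p.1) * d ((σ*τ) p.2)) else 1)
      = (if σ (e p).2 < σ (e p).1 then (-1:ℝ) ^ (d (σ (e p).1) * d (σ (e p).2)) else 1)
        * (if τ p.2 < τ p.1 then (-1:ℝ) ^ (d (σ (τ p.1)) * d (σ (τ p.2))) else 1) := by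
    intro p hp
    have hp12 : p.1 < p.2 := (hmemS p).1 hp
    have hστ : ∀ i, (σ * τ) i = σ (τ i) := fun i => rfl
    by_cases h1 : τ p.1 < τ p.2
    · simp only [he, if_pos h1, hστ, if_neg (not_lt.2 h1.le), mul_one]
    · have h1' : τ p.2 < τ p.1 := by
        rcases lt_trichotomy (τ p.1) (τ p.2) with h | h | h
        · exact absurd h h1
        · exact absurd (τ.injective h) (ne_of_lt hp12)
        · exact h
      simp only [he, if_neg h1, if_pos h1', hστ]
      by_cases h2 : σ (τ p.2) < σ (τ p.1)
      · rw [if_pos h2, if_neg (not_lt.2 h2.le), one_mul]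
      · have h2' : σ (τ p.1) < σ (τ p.2) := by
          rcases lt_trichotomy (σ (τ p.1)) (σ (τ p.2)) with h | h | h
          · exact h
          · exact absurd (σ.injective h) (ne_of_gt h1')
          · exact absurd h h2
        rw [if_neg h2, if_pos h2', hsq]
  have einv' : ∀ p : Fin n × Fin n, p.1 < p.2 → e' (e p) = p := by
    intro p hp12
    by_cases h1 : τ p.1 < τ p.2
    · simp only [he, he', if_pos h1, (fun x => Equiv.Perm.inv_eq_iff_eq.mpr rfl : ∀ x, τ⁻¹ (τ x) = x)]
      rw [if_pos hp12]
    · simp only [he, he', if_neg h1, (fun x => Equiv.Perm.inv_eq_iff_eq.mpr rfl : ∀ x, τ⁻¹ (τ x) = x)]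
      rw [if_neg (not_lt.2 hp12.le)]
  have einv : ∀ p : Fin n × Fin n, p.1 < p.2 → e (e' p) = p := by
    intro p hp12
    by_cases h1 : τ⁻¹ p.1 < τ⁻¹ p.2
    · simp only [he, he', if_pos h1, (show ∀ x, τ (τ⁻¹ x) = x from fun x => τ.apply_symm_apply x)]
      rw [if_pos hp12]
    · simp only [he, he', if_neg h1, (show ∀ x, τ (τ⁻¹ x) = x from fun x => τ.apply_symm_apply x)]
      rw [if_neg (not_lt.2 hp12.le)]
  have hbij : (∏ q ∈ S, (if σ q.2 < σ q.1 then (-1:ℝ) ^ (d (σ q.1) * d (σ q.2)) else 1))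
      = ∏ p ∈ S, (if σ (e p).2 < σ (e p).1 then (-1:ℝ) ^ (d (σ (e p).1) * d (σ (e p).2)) else 1) := by
    refine Finset.prod_bij' (fun p _ => e' p) (fun p _ => e p) ?_ ?_ ?_ ?_ ?_
    · intro p hp
      have hp12 : p.1 < p.2 := (hmemS p).1 hp
      rw [hmemS]
      by_cases h1 : τ⁻¹ p.1 < τ⁻¹ p.2
      · simp only [he', if_pos h1]; exact h1
      · have : τ⁻¹ p.2 < τ⁻¹ p.1 := by
          rcases lt_trichotomy (τ⁻¹ p.1) (τ⁻¹ p.2) with h | h | h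
          · exact absurd h h1
          · exact absurd (τ⁻¹.injective h) (ne_of_lt hp12)
          · exact h
        simp only [he', if_neg h1]; exact this
    · intro p hp
      have hp12 : p.1 < p.2 := (hmemS p).1 hp
      rw [hmemS]
      by_cases h1 : τ p.1 < τ p.2
      · simpa [he, h1] using h1
      · have : τ p.2 < τ p.1 := by
          rcases lt_trichotomy (τ p.1) (τ p.2) with h | h | h
          · exact absurd h h1
          · exact absurd (τ.injective h) (ne_of_lt hp12)
          · exact h
        simpa [he, h1] using this
    · intro p hp
      exact einv p ((hmemS p).1 hp)
    · intro p hp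
      exact einv' p ((hmemS p).1 hp)
    · intro p hp
      rw [einv p ((hmemS p).1 hp)]
  rw [koszul_eq_prod, koszul_eq_prod, koszul_eq_prod]
  rw [← hS]
  calc (∏ p ∈ S, (if (σ * τ) p.2 < (σ * τ) p.1 then (-1:ℝ) ^ (d ((σ*τ) p.1) * d ((σ*τ) p.2)) else 1))
      = ∏ p ∈ S, ((if σ (e p).2 < σ (e p).1 then (-1:ℝ) ^ (d (σ (e p).1) * d (σ (e p).2)) else 1)
        * (if τ p.2 < τ p.1 then (-1:ℝ) ^ (d (σ (τ p.1)) * d (σ (τ p.2))) else 1)) :=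
        Finset.prod_congr rfl key
    _ = (∏ p ∈ S, (if σ (e p).2 < σ (e p).1 then (-1:ℝ) ^ (d (σ (e p).1) * d (σ (e p).2)) else 1))
        * ∏ p ∈ S, (if τ p.2 < τ p.1 then (-1:ℝ) ^ (d (σ (τ p.1)) * d (σ (τ p.2))) else 1) :=
        Finset.prod_mul_distrib
    _ = (∏ q ∈ S, (if σ q.2 < σ q.1 then (-1:ℝ) ^ (d (σ q.1) * d (σ q.2)) else 1))
        * ∏ p ∈ S, (if τ p.2 < τ p.1 then (-1:ℝ) ^ (d (σ (τ p.1)) * d (σ (τ p.2))) else 1) := by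
        rw [hbij]

lemma D_one (V : VAlg H) (E : H →ₗ[ℝ] H) (P0 : H) (y : Fin 1 → H) :
    V.D E P0 1 y = V.proj (E (y 0)) := by
  show V.proj (List.foldl (fun z a => V.brk z a) (E (y 0))
      (List.ofFn fun i : Fin 0 => y i.succ)) = _
  simp

lemma single_term_eq (V : VAlg H) (mt : H →ₗ[ℝ] H) (n : ℕ) (hn : 0 < n)
    (d : Fin n → ℤ) (x : Fin n → H) (σ : Equiv.Perm (Fin n))
    (C : (k : ℕ) → (Fin k → ℤ) → (Fin k → H) → H) :
    (koszul σ d /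
        ((Nat.factorial (Composition.single n hn).length : ℝ) *
          ∏ j : Fin (Composition.single n hn).length,
            (Nat.factorial ((Composition.single n hn).blocksFun j) : ℝ))) •
      V.D mt 0 (Composition.single n hn).length
        (fun j => C ((Composition.single n hn).blocksFun j)
          (fun i => d (σ ((Composition.single n hn).embedding j i)))
          (fun i => x (σ ((Composition.single n hn).embedding j i))))
    = (koszul σ d / (Nat.factorial n : ℝ)) •
        V.proj (mt (C n (fun i => d (σ i)) (fun i => x (σ i)))) := by
  show (koszul σ d /
        ((Nat.factorial 1 : ℝ) *
          ∏ j : Fin 1, (Nat.factorial ((Composition.single n hn).blocksFun j) : ℝ))) •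
      V.D mt 0 1
        (fun j : Fin 1 => C ((Composition.single n hn).blocksFun j)
          (fun i => d (σ ((Composition.single n hn).embedding j i)))
          (fun i => x (σ ((Composition.single n hn).embedding j i))))
    = _
  rw [D_one]
  have key : ∀ (k : ℕ) (f : Fin k → Fin n), k = n → (∀ i, (f i : ℕ) = i) →
      C k (fun i => d (σ (f i))) (fun i => x (σ (f i))) = C n (fun i => d (σ i)) (fun i => x (σ i)) := by
    rintro k f rfl hf
    have : f = id := funext fun i => Fin.ext (hf i)
    subst this; rfl
  rw [key ((Composition.single n hn).blocksFun (0 : Fin 1)) ((Composition.single n hn).embedding (0 : Fin 1))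
    (Composition.single_blocksFun hn _) (fun i => congrArg Fin.val (Composition.single_embedding hn i))]
  have h2 : ((Nat.factorial 1 : ℝ) *
      ∏ j : Fin 1, (Nat.factorial ((Composition.single n hn).blocksFun j) : ℝ))
      = (Nat.factorial n : ℝ) := by
    have hb : ∀ j : Fin 1, (Composition.single n hn).blocksFun j = n :=
      fun j => Composition.single_blocksFun hn j
    simp only [hb]
    norm_num
  rw [h2]

lemma eqnRHS_sub (V : VAlg H) (mt : H →ₗ[ℝ] H)
    (A B : (k : ℕ) → (Fin k → ℤ) → (Fin k → H) → H)
    (n : ℕ) (hn : 0 < n) (d : Fin n → ℤ) (x : Fin n → H) (hx : HomA V d x)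
    (hAB : ∀ l, l < n → ∀ (d' : Fin l → ℤ) (x' : Fin l → H), HomA V d' x' →
      A l d' x' = B l d' x') :
    eqnRHS V mt A n d x - eqnRHS V mt B n d x
      = ∑ σ : Equiv.Perm (Fin n), (koszul σ d / (Nat.factorial n : ℝ)) •
          (V.proj (mt (A n (fun i => d (σ i)) (fun i => x (σ i))))
           - V.proj (mt (B n (fun i => d (σ i)) (fun i => x (σ i))))) := by
  rw [eqnRHS, eqnRHS, ← Finset.sum_sub_distrib]
  refine Finset.sum_congr rfl (fun σ _ => ?_)
  rw [← Finset.sum_sub_distrib]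
  rw [Finset.sum_eq_single (Composition.single n hn)]
  · rw [single_term_eq V mt n hn d x σ A, single_term_eq V mt n hn d x σ B, ← smul_sub]
  · intro c _ hc
    have hlt : ∀ j : Fin c.length, c.blocksFun j < n := (Composition.ne_single_iff hn).1 hc
    have heq : (fun j => A (c.blocksFun j)
          (fun i => d (σ (c.embedding j i))) (fun i => x (σ (c.embedding j i))))
        = (fun j => B (c.blocksFun j)
          (fun i => d (σ (c.embedding j i))) (fun i => x (σ (c.embedding j i)))) := by
      funext j
      exact hAB _ (hlt j) _ _ ⟨fun i => hx.1 _, fun i => hx.2 _⟩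
    rw [heq, sub_self]
  · intro h
    exact absurd (Finset.mem_univ _) h

/-- Under the uniqueness assumption for the Cauchy problem
`d/dt λ = Π∘m_t∘λ, λ₀ = 0`, any two solutions of the flow system on `[0,1]` with `U⁰ = 0`
and the same initial values at `t = 0` coincide. -/
theorem analytic_flow_system_uniqueness
    (H : Type) [NormedAddCommGroup H] [NormedSpace ℝ H] (V : VAlg H)
    (m : ℝ → H →ₗ[ℝ] H)
    (hder : ∀ t ∈ Set.Icc (0 : ℝ) 1, IsDer V.toGLA 0 (m t))
    (hproj : ∀ t ∈ Set.Icc (0 : ℝ) 1, ∀ x : H, V.proj (m t (V.proj x)) = V.proj (m t x))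
    (huniq : ∀ c : ℝ → H,
        (∀ t ∈ Set.Icc (0 : ℝ) 1, V.inA (c t)) →
        (∀ t ∈ Set.Icc (0 : ℝ) 1,
          HasDerivWithinAt c (V.proj (m t (c t))) (Set.Icc (0 : ℝ) 1) t) →
        c 0 = 0 → ∀ t ∈ Set.Icc (0 : ℝ) 1, c t = 0)
    (U U' : ℝ → (n : ℕ) → (Fin n → ℤ) → (Fin n → H) → H)
    (hU : IsAnalyticSol V m U) (hU' : IsAnalyticSol V m U')
    (hinit : ∀ (n : ℕ) (d : Fin n → ℤ) (x : Fin n → H), HomA V d x →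
      U 0 n d x = U' 0 n d x) :
    ∀ t ∈ Set.Icc (0 : ℝ) 1, ∀ (n : ℕ) (d : Fin n → ℤ) (x : Fin n → H), HomA V d x →
      U t n d x = U' t n d x := by
  obtain ⟨hU0, hUa, hUd⟩ := hU
  obtain ⟨hU'0, hU'a, hU'd⟩ := hU'
  have main : ∀ n : ℕ, ∀ (d : Fin n → ℤ) (x : Fin n → H), HomA V d x →
      ∀ t ∈ Set.Icc (0:ℝ) 1, U t n d x = U' t n d x := by
    intro n
    induction n using Nat.strong_induction_on with
    | _ n IH =>
    rcases Nat.eq_zero_or_pos n with rfl | hn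
    · intro d x _ t _
      rw [hU0, hU'0]
    intro d x hx t ht
    have hn1 : 1 ≤ n := hn
    set g : Equiv.Perm (Fin n) → ℝ → H := fun σ s =>
      U s n (fun i => d (σ i)) (fun i => x (σ i))
        - U' s n (fun i => d (σ i)) (fun i => x (σ i)) with hg
    set c : ℝ → H := fun s =>
      ∑ σ : Equiv.Perm (Fin n), (koszul σ d / (Nat.factorial n : ℝ)) • g σ s with hc
    have hhom : ∀ σ : Equiv.Perm (Fin n),
        HomA V (fun i => d (σ i)) (fun i => x (σ i)) :=
      fun σ => ⟨fun i => hx.1 _, fun i => hx.2 _⟩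
    have hfact : (Nat.factorial n : ℝ) ≠ 0 := Nat.cast_ne_zero.2 (Nat.factorial_ne_zero n)
    have hder_g : ∀ (σ : Equiv.Perm (Fin n)), ∀ s ∈ Set.Icc (0:ℝ) 1,
        HasDerivWithinAt (g σ)
          (∑ τ : Equiv.Perm (Fin n),
            (koszul τ (fun i => d (σ i)) / (Nat.factorial n : ℝ)) •
              V.proj (m s (g (σ * τ) s))) (Set.Icc (0:ℝ) 1) s := by
      intro σ s hs
      have h3 := (hUd n hn1 _ _ (hhom σ) s hs).sub (hU'd n hn1 _ _ (hhom σ) s hs)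
      have h4 : eqnRHS V (m s) (U s) n (fun i => d (σ i)) (fun i => x (σ i))
          - eqnRHS V (m s) (U' s) n (fun i => d (σ i)) (fun i => x (σ i))
          = ∑ τ : Equiv.Perm (Fin n),
            (koszul τ (fun i => d (σ i)) / (Nat.factorial n : ℝ)) •
              V.proj (m s (g (σ * τ) s)) := by
        rw [eqnRHS_sub V (m s) (U s) (U' s) n hn (fun i => d (σ i)) (fun i => x (σ i))
          (hhom σ) (fun l hl d' x' h' => IH l hl d' x' h' s hs)]
        refine Finset.sum_congr rfl (fun τ _ => ?_)
        congr 1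
        simp only [hg]
        rw [map_sub (m s), map_sub V.proj]
        rfl
      rw [h4] at h3
      exact h3
    have hder_c : ∀ s ∈ Set.Icc (0:ℝ) 1,
        HasDerivWithinAt c (V.proj (m s (c s))) (Set.Icc (0:ℝ) 1) s := by
      intro s hs
      have h := HasDerivWithinAt.fun_sum (u := (Finset.univ : Finset (Equiv.Perm (Fin n))))
        (fun σ _ => ((hder_g σ s hs).const_smul (koszul σ d / (Nat.factorial n : ℝ))))
      have hval : (∑ σ : Equiv.Perm (Fin n), (koszul σ d / (Nat.factorial n : ℝ)) •
          ∑ τ : Equiv.Perm (Fin n),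
            (koszul τ (fun i => d (σ i)) / (Nat.factorial n : ℝ)) •
              V.proj (m s (g (σ * τ) s))) = V.proj (m s (c s)) := by
        have hrhs : V.proj (m s (c s)) = ∑ ρ : Equiv.Perm (Fin n),
            (koszul ρ d / (Nat.factorial n : ℝ)) • V.proj (m s (g ρ s)) := by
          rw [hc]
          simp only [map_sum, map_smul]
        rw [hrhs]
        have step1 : ∀ σ : Equiv.Perm (Fin n),
            ((koszul σ d / (Nat.factorial n : ℝ)) •
              ∑ τ : Equiv.Perm (Fin n),
                (koszul τ (fun i => d (σ i)) / (Nat.factorial n : ℝ)) •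
                  V.proj (m s (g (σ * τ) s)))
            = ∑ ρ : Equiv.Perm (Fin n),
                (koszul ρ d / ((Nat.factorial n : ℝ) * (Nat.factorial n : ℝ))) •
                  V.proj (m s (g ρ s)) := by
          intro σ
          rw [Finset.smul_sum]
          calc (∑ τ : Equiv.Perm (Fin n), (koszul σ d / (Nat.factorial n : ℝ)) •
                ((koszul τ (fun i => d (σ i)) / (Nat.factorial n : ℝ)) •
                  V.proj (m s (g (σ * τ) s))))
              = ∑ τ : Equiv.Perm (Fin n),
                  (koszul (σ * τ) d / ((Nat.factorial n : ℝ) * (Nat.factorial n : ℝ))) •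
                    V.proj (m s (g (σ * τ) s)) := by
                refine Finset.sum_congr rfl (fun τ _ => ?_)
                rw [smul_smul, div_mul_div_comm, ← koszul_mul]
            _ = ∑ ρ : Equiv.Perm (Fin n),
                  (koszul ρ d / ((Nat.factorial n : ℝ) * (Nat.factorial n : ℝ))) •
                    V.proj (m s (g ρ s)) :=
                Fintype.sum_equiv (Equiv.mulLeft σ) _ _ (fun τ => rfl)
        rw [Finset.sum_congr rfl (fun σ _ => step1 σ)]
        rw [Finset.sum_const, Finset.card_univ, Fintype.card_perm, Fintype.card_fin]
        rw [← Nat.cast_smul_eq_nsmul ℝ, Finset.smul_sum]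
        refine Finset.sum_congr rfl (fun ρ _ => ?_)
        rw [smul_smul]
        congr 1
        field_simp
      rw [← hval]
      exact h
    have hcA : ∀ s ∈ Set.Icc (0:ℝ) 1, V.inA (c s) := by
      intro s _
      show V.proj (c s) = c s
      rw [hc]
      rw [map_sum]
      refine Finset.sum_congr rfl (fun σ _ => ?_)
      rw [map_smul]
      congr 1
      simp only [hg]
      have h1 : V.proj (U s n (fun i => d (σ i)) (fun i => x (σ i)))
          = U s n (fun i => d (σ i)) (fun i => x (σ i)) := hUa s n _ _ (hhom σ)
      have h2 : V.proj (U' s n (fun i => d (σ i)) (fun i => x (σ i)))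
          = U' s n (fun i => d (σ i)) (fun i => x (σ i)) := hU'a s n _ _ (hhom σ)
      rw [map_sub, h1, h2]
    have hc0 : c 0 = 0 := by
      rw [hc]
      refine Finset.sum_eq_zero (fun σ _ => ?_)
      simp only [hg]
      rw [hinit n _ _ (hhom σ), sub_self, smul_zero]
    have hcz := huniq c hcA hder_c hc0
    have hgd : ∀ s ∈ Set.Icc (0:ℝ) 1,
        HasDerivWithinAt (fun r => U r n d x - U' r n d x) (0 : H) (Set.Icc (0:ℝ) 1) s := by
      intro s hs
      have h := hder_g 1 s hs
      have hval : (∑ τ : Equiv.Perm (Fin n),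
          (koszul τ (fun i => d ((1 : Equiv.Perm (Fin n)) i)) / (Nat.factorial n : ℝ)) •
            V.proj (m s (g ((1 : Equiv.Perm (Fin n)) * τ) s))) = 0 := by
        have heq2 : (∑ τ : Equiv.Perm (Fin n),
            (koszul τ (fun i => d ((1 : Equiv.Perm (Fin n)) i)) / (Nat.factorial n : ℝ)) •
              V.proj (m s (g ((1 : Equiv.Perm (Fin n)) * τ) s)))
            = V.proj (m s (c s)) := by
          rw [hc]
          simp only [map_sum, map_smul, Equiv.Perm.one_apply, one_mul]
        rw [heq2, hcz s hs, map_zero, map_zero]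
      rw [hval] at h
      exact h
    have hnorm := (convex_Icc (0:ℝ) 1).norm_image_sub_le_of_norm_hasDerivWithin_le
      (f' := fun _ => (0 : H)) (C := 0) hgd (fun s _ => by simp)
      (Set.left_mem_Icc.2 zero_le_one) ht
    rw [zero_mul] at hnorm
    have h0 : U 0 n d x - U' 0 n d x = 0 := by rw [hinit n d x hx, sub_self]
    rw [h0, sub_zero] at hnorm
    have hz := norm_le_zero_iff.1 hnorm
    exact sub_eq_zero.1 hz
  intro t ht n d x hx
  exact main n d x hx t ht
end
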